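/- Every block interchange operation on a linear chromosome is equivalent to the composition of two DCJ operations: an excision that extracts and circularizes a segment, followed by a reintegration of the resulting circular chromosome into the linear chromosome. Precisely, for a genome (∘ 1 U 2 V 3 ∘) in which the block interchange swaps the segments U and V, the first DCJ produces (∘ 1 V 3 ∘)(U 2) and the second produces (∘ 1 V 2 U 3 ∘). -/

import Mathlib

namespace Rearr

/-- A marker occurrence: gene identifier and paralog copy flag. -/
abbrev Occ : Type := ℕ × Bool

/-- An extremity of a marker occurrence (`true` = head, `false` = tail). -/
abbrev Ext : Type := Occ × Bool

/-- The paralogous extremity: other copy, same end. -/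
def flipCopy (e : Ext) : Ext := ((e.1.1, !e.1.2), e.2)

/-- The paralogous opposite extremity: other copy, other end. -/
def coFlip (e : Ext) : Ext := ((e.1.1, !e.1.2), !e.2)

/-- A genome: a finite set of marker occurrences together with a set of
adjacencies, i.e. a partial matching on the extremities of the occurrences.
Unmatched extremities are telomeres; an adjacency is an unordered pair of
extremities, so that the adjacencies `(x y)` and `(−y −x)` are identified. -/
structure Genome where
  occs : Finset Occ
  adj : Finset (Sym2 Ext)

namespace Genome

/-- Well-formedness of a genome: adjacencies only involve extremities of
present occurrences, and every extremity lies in at most one adjacency. -/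
def WF (G : Genome) : Prop :=
  (∀ p ∈ G.adj, ∀ e ∈ p, (e : Ext).1 ∈ G.occs) ∧
  ∀ p ∈ G.adj, ∀ q ∈ G.adj, ∀ e : Ext, e ∈ p → e ∈ q → p = q

def matched (G : Genome) (e : Ext) : Prop := ∃ p ∈ G.adj, e ∈ p

/-- `e` is a telomere of `G`. -/
def telo (G : Genome) (e : Ext) : Prop := e.1 ∈ G.occs ∧ ¬ G.matched e

/-- a non-duplicated genome: no marker is duplicated. -/
def NonDup (G : Genome) : Prop :=
  ∀ g : ℕ, ¬ (((g, true) : Occ) ∈ G.occs ∧ ((g, false) : Occ) ∈ G.occs)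

/-- a totally duplicated genome: every marker appears exactly twice. -/
def TotDup (G : Genome) : Prop :=
  ∀ g : ℕ, ∀ c : Bool, ((g, c) : Occ) ∈ G.occs → ((g, !c) : Occ) ∈ G.occs

/-- the marker `g` is duplicated in `G`. -/
def DupGene (G : Genome) (g : ℕ) : Prop :=
  ((g, true) : Occ) ∈ G.occs ∧ ((g, false) : Occ) ∈ G.occs

/-- number of distinct markers (genes). -/
def numGenes (G : Genome) : ℕ := (G.occs.image Prod.fst).card

/-- A dedoubled genome: each duplicated marker `x` forms a doublet
`(x x̄)` or `(x̄ x)`. -/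
def Dedoubled (G : Genome) : Prop :=
  ∀ g : ℕ, G.DupGene g →
    ∃ c : Bool, s((((g, c), true) : Ext), (((g, !c), false) : Ext)) ∈ G.adj

/-- Two extremities lie in the same chromosome of `G`. -/
def chromRel (G : Genome) (e f : Ext) : Prop :=
  Relation.EqvGen (fun e f => s(e, f) ∈ G.adj ∨ (e.1 = f.1 ∧ e.1 ∈ G.occs)) e f

/-- `G` consists of a single linear chromosome. -/
def Unilinear (G : Genome) : Prop :=
  G.occs.Nonempty ∧ (∀ e f : Ext, e.1 ∈ G.occs → f.1 ∈ G.occs → G.chromRel e f) ∧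
  ∃ e : Ext, G.telo e

/-- `G` consists of a single circular chromosome. -/
def Unicircular (G : Genome) : Prop :=
  G.occs.Nonempty ∧ (∀ e f : Ext, e.1 ∈ G.occs → f.1 ∈ G.occs → G.chromRel e f) ∧
  ∀ e : Ext, ¬ G.telo e

end Genome

/-- A DCJ operation: cut two adjacencies of the genome and rejoin the four
exposed extremities in any possible way (including the degenerate variants
involving telomeres). -/
def IsDCJ (G G' : Genome) : Prop :=
  G.WF ∧ G'.WF ∧ G.occs = G'.occs ∧
  ((∃ a b c d : Ext, s(a, b) ∈ G.adj ∧ s(c, d) ∈ G.adj ∧ s(a, b) ≠ s(c, d) ∧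
      (G'.adj = insert s(a, c) (insert s(b, d) ((G.adj.erase s(a, b)).erase s(c, d))) ∨
       G'.adj = insert s(a, d) (insert s(b, c) ((G.adj.erase s(a, b)).erase s(c, d))))) ∨
   (∃ a b c : Ext, s(a, b) ∈ G.adj ∧ G.telo c ∧
      G'.adj = insert s(a, c) (G.adj.erase s(a, b))) ∨
   (∃ a b : Ext, s(a, b) ∈ G.adj ∧ G'.adj = G.adj.erase s(a, b)) ∨
   (∃ a b : Ext, G.telo a ∧ G.telo b ∧ a ≠ b ∧ G'.adj = insert s(a, b) G.adj))

/-- A reversal: a DCJ that inverts a segment of a chromosome, i.e. a DCJ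
preserving the telomeres and the distribution of markers into chromosomes. -/
def IsReversal (G G' : Genome) : Prop :=
  IsDCJ G G' ∧ (∀ e : Ext, G.matched e ↔ G'.matched e) ∧
  ∀ e f : Ext, G.chromRel e f ↔ G'.chromRel e f

/-- `Scen R ℓ G H`: a scenario of `ℓ` operations of type `R` transforms `G` into `H`. -/
def Scen {α : Type*} (R : α → α → Prop) : ℕ → α → α → Prop
  | 0, G, H => G = H
  | n + 1, G, H => ∃ K, R G K ∧ Scen R n K H

namespace Genome

/-- The natural graph `NG(G)`, as a relation on extremities: two extremities
are related if they lie in the same adjacency (the same vertex of `NG(G)`) or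
are the two endpoints of an edge of `NG(G)` (paralogous extremities with the
same end). -/
def ngRel (G : Genome) (e f : Ext) : Prop :=
  Relation.EqvGen (fun e f => s(e, f) ∈ G.adj ∨
    (f = flipCopy e ∧ e.1 ∈ G.occs ∧ f.1 ∈ G.occs)) e f

/-- a connected component of the natural graph. -/
def IsNGClass (G : Genome) (S : Set Ext) : Prop :=
  ∃ e : Ext, e.1 ∈ G.occs ∧ S = {f | G.ngRel e f}

/-- a cycle of the natural graph: a component without telomere. -/
def IsNGCycle (G : Genome) (S : Set Ext) : Prop :=
  G.IsNGClass S ∧ ∀ e ∈ S, G.matched e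

/-- a path of the natural graph: a component containing a telomere. -/
def IsNGPath (G : Genome) (S : Set Ext) : Prop :=
  G.IsNGClass S ∧ ∃ e ∈ S, ¬ G.matched e

/-- the number of edges of a component of the natural graph. -/
noncomputable def ngEdges (G : Genome) (S : Set Ext) : ℕ :=
  Set.ncard {q : Sym2 Ext | ∃ e : Ext, q = s(e, flipCopy e) ∧
    e.1 ∈ G.occs ∧ (flipCopy e).1 ∈ G.occs ∧ e ∈ S}

/-- the number of cycles of the natural graph. -/
noncomputable def ngCycleCount (G : Genome) : ℕ :=
  Set.ncard {S : Set Ext | G.IsNGCycle S}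

/-- the number of even cycles of the natural graph. -/
noncomputable def ngEvenCycleCount (G : Genome) : ℕ :=
  Set.ncard {S : Set Ext | G.IsNGCycle S ∧ Even (G.ngEdges S)}

/-- the number of odd cycles of the natural graph. -/
noncomputable def ngOddCycleCount (G : Genome) : ℕ :=
  Set.ncard {S : Set Ext | G.IsNGCycle S ∧ Odd (G.ngEdges S)}

/-- the number of even paths of the natural graph. -/
noncomputable def ngEvenPathCount (G : Genome) : ℕ :=
  Set.ncard {S : Set Ext | G.IsNGPath S ∧ Even (G.ngEdges S)}

/-- The dedoubled adjacency graph `A(G)`, as a relation on extremities: two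
extremities are related if they lie in the same adjacency (vertex of `A(G)`)
or are the two endpoints of an edge of `A(G)` (for each marker `x`, one edge
between the head of `x` and the tail of `x̄`). -/
def daRel (G : Genome) (e f : Ext) : Prop :=
  Relation.EqvGen (fun e f => s(e, f) ∈ G.adj ∨
    (f = coFlip e ∧ e.1 ∈ G.occs ∧ f.1 ∈ G.occs)) e f

/-- an element (connected component) of the dedoubled adjacency graph. -/
def IsDAClass (G : Genome) (S : Set Ext) : Prop :=
  ∃ e : Ext, e.1 ∈ G.occs ∧ S = {f | G.daRel e f}

/-- a cycle of the dedoubled adjacency graph. -/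
def IsDACycle (G : Genome) (S : Set Ext) : Prop :=
  G.IsDAClass S ∧ ∀ e ∈ S, G.matched e

/-- a path of the dedoubled adjacency graph. -/
def IsDAPath (G : Genome) (S : Set Ext) : Prop :=
  G.IsDAClass S ∧ ∃ e ∈ S, ¬ G.matched e

end Genome

/-- the element `S` of `A(G)` contains the couple `(x, x̄)` of gene `g`
(it contains one of the two edges associated with `g`). -/
def ElemHasCouple (S : Set Ext) (g : ℕ) : Prop :=
  ∃ c h : Bool, (((g, c), h) : Ext) ∈ S

/-- the element `S` contains the couple of gene `g` twice (both of its edges). -/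
def ElemHasCoupleTwice (S : Set Ext) (g : ℕ) : Prop :=
  ∀ c h : Bool, (((g, c), h) : Ext) ∈ S

/-- a non-duplicated element of `A(G)`. -/
def NonDupElem (S : Set Ext) : Prop := ∀ g : ℕ, ¬ ElemHasCoupleTwice S g

/-- independent elements: no couple is contained in both. -/
def IndepElems (S T : Set Ext) : Prop :=
  ∀ g : ℕ, ¬ (ElemHasCouple S g ∧ ElemHasCouple T g)

/-- a family of pairwise independent non-duplicated cycles of `A(G)`. -/
def IndepCycleFam (G : Genome) (F : Finset (Set Ext)) : Prop :=
  (∀ S ∈ F, G.IsDACycle S ∧ NonDupElem S) ∧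
  ∀ S ∈ F, ∀ T ∈ F, S ≠ T → IndepElems S T

/-- a chromosome of `G`, as the set of extremities it carries. -/
def Genome.IsChrom (G : Genome) (S : Set Ext) : Prop :=
  ∃ e : Ext, e.1 ∈ G.occs ∧ S = {f | G.chromRel e f}

/-- a doubled chromosome: a chromosome globally invariant under the paralogy
map (reducible to `(x x̄)`). -/
def Genome.IsDoubledChrom (G : Genome) (S : Set Ext) : Prop :=
  G.IsChrom S ∧ flipCopy '' S = S

/-- the number of doubled chromosomes of `G`. -/
noncomputable def Genome.doubledCount (G : Genome) : ℕ :=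
  Set.ncard {S : Set Ext | G.IsDoubledChrom S}

/-- A perfectly duplicated genome: totally duplicated, every adjacency is a
double-adjacency, and no adjacency is of the form `(x −x̄)`. -/
def Genome.PerfDup (G : Genome) : Prop :=
  G.TotDup ∧ (∀ p ∈ G.adj, Sym2.map flipCopy p ∈ G.adj) ∧
  ∀ e : Ext, s(e, flipCopy e) ∉ G.adj

/-- `Gc` is obtained from the unilinear genome `G` by circularization:
its two telomeres are joined into an adjacency. -/
def Circularize (G Gc : Genome) : Prop :=
  Gc.occs = G.occs ∧ ∃ e f : Ext, G.telo e ∧ G.telo f ∧ e ≠ f ∧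
    Gc.adj = insert s(e, f) G.adj

/-- a signed marker: gene id, paralog copy flag, sign (`true` = positive). -/
abbrev Mk : Type := ℕ × Bool × Bool

def mOcc (m : Mk) : Occ := (m.1, m.2.1)

/-- right(reading)-facing extremity of a signed marker. -/
def rExt (m : Mk) : Ext := (mOcc m, m.2.2)

/-- left(reading)-facing extremity of a signed marker. -/
def lExt (m : Mk) : Ext := (mOcc m, !m.2.2)

/-- the adjacencies of a linear chromosome given by a list of signed markers. -/
def linAdj : List Mk → Finset (Sym2 Ext)
  | [] => ∅
  | [_] => ∅
  | x :: y :: t => insert s(rExt x, lExt y) (linAdj (y :: t))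

def occsOf (l : List Mk) : Finset Occ := (l.map mOcc).toFinset

/-- the unilinear genome with chromosome `(∘ l ∘)`. -/
def linGenome (l : List Mk) : Genome := ⟨occsOf l, linAdj l⟩

/-- the adjacencies of a circular chromosome given by a list of signed markers. -/
def circAdj (l : List Mk) : Finset (Sym2 Ext) :=
  match l with
  | [] => ∅
  | x :: t => insert s(rExt ((x :: t).getLast (by simp)), lExt x) (linAdj (x :: t))

/-- the unicircular genome obtained by circularizing `(∘ l ∘)`. -/
def circGenome (l : List Mk) : Genome := ⟨occsOf l, circAdj l⟩

/-- the paralogous copy of a signed marker (same gene, same sign, other copy). -/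
def copyFlipM (m : Mk) : Mk := (m.1, !m.2.1, m.2.2)

/-- A 1-tandem duplicated genome: a unilinear genome of the form `(∘ w w̄ ∘)`,
i.e. reducible to `(∘ x x̄ ∘)` by contracting runs of double-adjacencies. -/
def IsTandem (G : Genome) : Prop :=
  ∃ w : List Mk, w ≠ [] ∧ (w.map (fun m => m.1)).Nodup ∧
    G = linGenome (w ++ w.map copyFlipM)

end Rearr

namespace Rearr

open List

/-! ### Auxiliary lemmas -/

/-- the adjacency associated to an ordered pair of consecutive markers. -/
abbrev σa (x y : Mk) : Sym2 Ext := s(rExt x, lExt y)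

lemma mem_headI {l : List Mk} (h : l ≠ []) : l.headI ∈ l := by
  cases l with
  | nil => simp at h
  | cons z t => simp

lemma getLastI_eq_getLast {l : List Mk} (h : l ≠ []) : l.getLastI = l.getLast h := by
  rw [List.getLastI_eq_getLast?, List.getLast?_eq_getLast h, Option.getD_some]

lemma mem_getLastI {l : List Mk} (h : l ≠ []) : l.getLastI ∈ l := by
  rw [getLastI_eq_getLast h]; exact List.getLast_mem h

lemma headI_append {a b : List Mk} (ha : a ≠ []) : (a ++ b).headI = a.headI := by
  cases a with
  | nil => simp at ha
  | cons z t => simp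

lemma getLastI_append {a b : List Mk} (hb : b ≠ []) : (a ++ b).getLastI = b.getLastI := by
  obtain ⟨c, t, rfl⟩ := List.exists_cons_of_ne_nil hb
  rw [List.getLastI_eq_getLast?, List.getLastI_eq_getLast?, List.getLast?_append_cons]

lemma getLastI_cons {z : Mk} {t : List Mk} (ht : t ≠ []) :
    (z :: t).getLastI = t.getLastI := getLastI_append (a := [z]) ht

lemma pair_infix_cons {x y z : Mk} {t : List Mk} :
    [x, y] <:+: z :: t ↔ (x = z ∧ y = t.headI ∧ t ≠ []) ∨ [x, y] <:+: t := by
  rw [List.infix_cons_iff, List.cons_prefix_cons]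
  constructor
  · rintro (⟨rfl, h⟩ | h)
    · cases t with
      | nil => simp at h
      | cons w t' =>
        rw [List.cons_prefix_cons] at h
        exact Or.inl ⟨rfl, h.1, by simp⟩
    · exact Or.inr h
  · rintro (⟨rfl, rfl, ht⟩ | h)
    · cases t with
      | nil => simp at ht
      | cons w t' => exact Or.inl ⟨rfl, by simp [List.cons_prefix_cons]⟩
    · exact Or.inr h

lemma pair_infix_mem_left {x y : Mk} {l : List Mk} (h : [x, y] <:+: l) : x ∈ l :=
  h.subset (by simp)

lemma pair_infix_mem_right {x y : Mk} {l : List Mk} (h : [x, y] <:+: l) : y ∈ l :=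
  h.subset (by simp)

lemma succ_unique : ∀ {l : List Mk} {x y y' : Mk}, l.Nodup →
    [x, y] <:+: l → [x, y'] <:+: l → y = y'
  | [], _, _, _, _, h, _ => absurd (pair_infix_mem_left h) (by simp)
  | z :: t, x, y, y', hnd, h1, h2 => by
    rw [pair_infix_cons] at h1 h2
    rcases h1 with ⟨rfl, rfl, -⟩ | h1
    · rcases h2 with ⟨-, rfl, -⟩ | h2
      · rfl
      · exact absurd (pair_infix_mem_left h2) (List.nodup_cons.mp hnd).1
    · rcases h2 with ⟨rfl, rfl, -⟩ | h2
      · exact absurd (pair_infix_mem_left h1) (List.nodup_cons.mp hnd).1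
      · exact succ_unique (List.nodup_cons.mp hnd).2 h1 h2

lemma head_no_pred {l : List Mk} {x : Mk} (hnd : l.Nodup) (h : [x, l.headI] <:+: l) : False := by
  cases l with
  | nil => exact absurd (pair_infix_mem_left h) (by simp)
  | cons z t =>
    rcases pair_infix_cons.mp h with ⟨-, h1, ht⟩ | h1
    · exact (List.nodup_cons.mp hnd).1 (by rw [show (z :: t).headI = z from rfl] at h1; rw [h1]; exact mem_headI ht)
    · exact (List.nodup_cons.mp hnd).1 (pair_infix_mem_right (by simpa using h1))

lemma pred_unique : ∀ {l : List Mk} {x x' y : Mk}, l.Nodup →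
    [x, y] <:+: l → [x', y] <:+: l → x = x'
  | [], _, _, _, _, h, _ => absurd (pair_infix_mem_left h) (by simp)
  | z :: t, x, x', y, hnd, h1, h2 => by
    rw [pair_infix_cons] at h1 h2
    rcases h1 with ⟨rfl, rfl, ht⟩ | h1
    · rcases h2 with ⟨rfl, -, -⟩ | h2
      · rfl
      · exact absurd h2 (fun hh => head_no_pred (List.nodup_cons.mp hnd).2 hh)
    · rcases h2 with ⟨rfl, rfl, ht⟩ | h2
      · exact absurd h1 (fun hh => head_no_pred (List.nodup_cons.mp hnd).2 hh)
      · exact pred_unique (List.nodup_cons.mp hnd).2 h1 h2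

lemma last_no_succ : ∀ {l : List Mk} {y : Mk}, l.Nodup → [l.getLastI, y] <:+: l → False
  | [], _, _, h => absurd (pair_infix_mem_left h) (by simp)
  | z :: t, y, hnd, h => by
    rcases eq_or_ne t [] with rfl | ht
    · have := h.sublist.length_le; simp at this
    · rw [getLastI_cons ht] at h
      rcases pair_infix_cons.mp h with ⟨h1, -, -⟩ | h1
      · exact (List.nodup_cons.mp hnd).1 (h1 ▸ mem_getLastI ht)
      · exact last_no_succ (List.nodup_cons.mp hnd).2 h1

lemma pair_infix_append : ∀ {a : List Mk} {b : List Mk} {x y : Mk},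
    [x, y] <:+: a ++ b ↔
      [x, y] <:+: a ∨ [x, y] <:+: b ∨ (a ≠ [] ∧ x = a.getLastI ∧ y = b.headI ∧ b ≠ [])
  | [], b, x, y => by
    simp only [List.nil_append, ne_eq, not_true_eq_false, false_and, or_false]
    constructor
    · exact fun h => Or.inr h
    · rintro (h | h)
      · exact absurd (pair_infix_mem_left h) (by simp)
      · exact h
  | z :: t, b, x, y => by
    rw [List.cons_append, pair_infix_cons, pair_infix_append (a := t), pair_infix_cons]
    rcases eq_or_ne t [] with rfl | ht
    · simp only [List.nil_append, List.getLastI]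
      constructor
      · rintro (⟨rfl, rfl, hb⟩ | h | h | ⟨h, -⟩)
        · exact Or.inr (Or.inr ⟨by simp, rfl, rfl, hb⟩)
        · exact absurd (pair_infix_mem_left h) (by simp)
        · exact Or.inr (Or.inl h)
        · exact absurd h (by simp)
      · rintro ((⟨-, -, h⟩ | h) | h | ⟨-, rfl, rfl, hb⟩)
        · exact absurd rfl h
        · exact absurd (pair_infix_mem_left h) (by simp)
        · exact Or.inr (Or.inr (Or.inl h))
        · exact Or.inl ⟨rfl, rfl, hb⟩
    · have h1 : (t ++ b).headI = t.headI := headI_append ht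
      have h2 : (z :: t).getLastI = t.getLastI := getLastI_cons ht
      have h3 : t ++ b ≠ [] := by simp [ht]
      rw [h1, h2]
      constructor
      · rintro (⟨rfl, rfl, -⟩ | h | h | ⟨-, rfl, rfl, hb⟩)
        · exact Or.inl (Or.inl ⟨rfl, rfl, ht⟩)
        · exact Or.inl (Or.inr h)
        · exact Or.inr (Or.inl h)
        · exact Or.inr (Or.inr ⟨by simp, rfl, rfl, hb⟩)
      · rintro ((⟨rfl, rfl, -⟩ | h) | h | ⟨-, rfl, rfl, hb⟩)
        · exact Or.inl ⟨rfl, rfl, h3⟩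
        · exact Or.inr (Or.inl h)
        · exact Or.inr (Or.inr (Or.inl h))
        · exact Or.inr (Or.inr (Or.inr ⟨ht, rfl, rfl, hb⟩))

lemma junction_infix {a b : List Mk} (ha : a ≠ []) (hb : b ≠ []) :
    [a.getLastI, b.headI] <:+: a ++ b :=
  pair_infix_append.mpr (Or.inr (Or.inr ⟨ha, rfl, rfl, hb⟩))

lemma mem_linAdj : ∀ {l : List Mk} {t : Sym2 Ext},
    t ∈ linAdj l ↔ ∃ x y, [x, y] <:+: l ∧ t = σa x y
  | [], t => by
    constructor
    · intro h; simp [linAdj] at h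
    · rintro ⟨x, y, h, -⟩; exact absurd (pair_infix_mem_left h) (by simp)
  | [m], t => by
    constructor
    · intro h; simp [linAdj] at h
    · rintro ⟨x, y, h, -⟩
      have := h.sublist.length_le; simp at this
  | z :: w :: l, t => by
    rw [show linAdj (z :: w :: l) = insert (σa z w) (linAdj (w :: l)) from rfl,
      Finset.mem_insert, mem_linAdj (l := w :: l)]
    constructor
    · rintro (rfl | ⟨x, y, h, rfl⟩)
      · exact ⟨z, w, ⟨[], l, by simp⟩, rfl⟩
      · exact ⟨x, y, h.trans (List.infix_cons (List.infix_refl _)), rfl⟩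
    · rintro ⟨x, y, h, rfl⟩
      rcases pair_infix_cons.mp h with ⟨rfl, rfl, -⟩ | h'
      · exact Or.inl rfl
      · exact Or.inr ⟨x, y, h', rfl⟩

lemma linAdj_append : ∀ {a b : List Mk}, a ≠ [] → b ≠ [] →
    linAdj (a ++ b) = insert (σa a.getLastI b.headI) (linAdj a ∪ linAdj b)
  | [], b, ha, _ => absurd rfl ha
  | [z], b, _, hb => by
    obtain ⟨w, t, rfl⟩ := List.exists_cons_of_ne_nil hb
    show linAdj (z :: w :: t) = _
    rw [show linAdj (z :: w :: t) = insert (σa z w) (linAdj (w :: t)) from rfl,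
      show linAdj [z] = (∅ : Finset (Sym2 Ext)) from rfl]
    simp [σa, List.getLastI]
  | z :: z' :: t, b, _, hb => by
    have ih := linAdj_append (a := z' :: t) (b := b) (by simp) hb
    show linAdj (z :: (z' :: t ++ b)) = _
    obtain ⟨w, tb, hw⟩ := List.exists_cons_of_ne_nil hb
    rw [show linAdj (z :: (z' :: t ++ b)) = insert (σa z z') (linAdj (z' :: t ++ b)) from rfl,
      ih, getLastI_cons (t := z' :: t) (by simp),
      show linAdj (z :: z' :: t) = insert (σa z z') (linAdj (z' :: t)) from rfl]
    ext s; simp only [Finset.mem_insert, Finset.mem_union]; tauto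

lemma circAdj_eq {w : List Mk} (hw : w ≠ []) :
    circAdj w = insert (σa w.getLastI w.headI) (linAdj w) := by
  obtain ⟨z, t, rfl⟩ := List.exists_cons_of_ne_nil hw
  rw [circAdj, getLastI_eq_getLast (by simp)]
  rfl

lemma circAdj_rotate : ∀ (a b : List Mk), circAdj (a ++ b) = circAdj (b ++ a)
  | [], b => by simp
  | a, [] => by simp
  | z :: ta, w :: tb => by
    set a := z :: ta
    set b := w :: tb
    have ha : a ≠ [] := by simp [a]
    have hb : b ≠ [] := by simp [b]
    rw [circAdj_eq (by simp [a]), circAdj_eq (by simp [b]), linAdj_append ha hb,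
      linAdj_append hb ha, getLastI_append hb, getLastI_append ha, headI_append ha,
      headI_append hb]
    ext s; simp only [Finset.mem_insert, Finset.mem_union]; tauto

lemma mem_circAdj {w : List Mk} (hw : w ≠ []) {t : Sym2 Ext} :
    t ∈ circAdj w ↔
      ∃ x y, ([x, y] <:+: w ∨ (x = w.getLastI ∧ y = w.headI)) ∧ t = σa x y := by
  rw [circAdj_eq hw, Finset.mem_insert, mem_linAdj]
  constructor
  · rintro (rfl | ⟨x, y, h, rfl⟩)
    · exact ⟨_, _, Or.inr ⟨rfl, rfl⟩, rfl⟩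
    · exact ⟨x, y, Or.inl h, rfl⟩
  · rintro ⟨x, y, h | ⟨rfl, rfl⟩, rfl⟩
    · exact Or.inr ⟨x, y, h, rfl⟩
    · exact Or.inl rfl

section OccInj

variable {L : List Mk}

lemma occ_inj (hL : (L.map mOcc).Nodup) {x y : Mk} (hx : x ∈ L) (hy : y ∈ L)
    (h : mOcc x = mOcc y) : x = y :=
  List.inj_on_of_nodup_map hL hx hy h

lemma rExt_inj (hL : (L.map mOcc).Nodup) {x y : Mk} (hx : x ∈ L) (hy : y ∈ L)
    (h : rExt x = rExt y) : x = y :=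
  occ_inj hL hx hy (congrArg Prod.fst h)

lemma lExt_inj (hL : (L.map mOcc).Nodup) {x y : Mk} (hx : x ∈ L) (hy : y ∈ L)
    (h : lExt x = lExt y) : x = y :=
  occ_inj hL hx hy (congrArg Prod.fst h)

lemma rExt_ne_lExt (hL : (L.map mOcc).Nodup) {x y : Mk} (hx : x ∈ L) (hy : y ∈ L) :
    rExt x ≠ lExt y := by
  intro h
  obtain rfl := occ_inj hL hx hy (congrArg Prod.fst h)
  have h2 : x.2.2 = !x.2.2 := congrArg Prod.snd h
  simp at h2

lemma σa_eq_iff (hL : (L.map mOcc).Nodup) {x y x' y' : Mk} (hx : x ∈ L) (hy : y ∈ L)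
    (hx' : x' ∈ L) (hy' : y' ∈ L) : σa x y = σa x' y' ↔ x = x' ∧ y = y' := by
  unfold σa
  rw [Sym2.eq_iff]
  constructor
  · rintro (⟨h1, h2⟩ | ⟨h1, h2⟩)
    · exact ⟨rExt_inj hL hx hx' h1, lExt_inj hL hy hy' h2⟩
    · exact absurd h1 (rExt_ne_lExt hL hx hy')
  · rintro ⟨rfl, rfl⟩
    exact Or.inl ⟨rfl, rfl⟩

/-- generic well-formedness of a genome whose adjacencies come from a
successor relation on markers. -/
lemma wf_of_rel (hL : (L.map mOcc).Nodup) (occs : Finset Occ)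
    (adj : Finset (Sym2 Ext)) (E : Mk → Mk → Prop)
    (hmem : ∀ t, t ∈ adj ↔ ∃ x y, E x y ∧ t = σa x y)
    (hEL : ∀ {x y}, E x y → x ∈ L ∧ y ∈ L)
    (hocc : ∀ {x}, x ∈ L → mOcc x ∈ occs)
    (hr : ∀ {x y y'}, E x y → E x y' → y = y')
    (hl : ∀ {x x' y}, E x y → E x' y → x = x') :
    Genome.WF ⟨occs, adj⟩ := by
  constructor
  · intro t ht e he
    obtain ⟨x, y, hE, rfl⟩ := (hmem t).mp ht
    rcases Sym2.mem_iff.mp he with rfl | rfl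
    · exact hocc (hEL hE).1
    · exact hocc (hEL hE).2
  · intro t ht t' ht' e he he'
    obtain ⟨x, y, hE, rfl⟩ := (hmem t).mp ht
    obtain ⟨x', y', hE', rfl⟩ := (hmem t').mp ht'
    obtain ⟨hx, hy⟩ := hEL hE
    obtain ⟨hx', hy'⟩ := hEL hE'
    rcases Sym2.mem_iff.mp he with rfl | rfl
    · rcases Sym2.mem_iff.mp he' with h2 | h2
      · obtain rfl := rExt_inj hL hx hx' h2
        obtain rfl := hr hE hE'
        rfl
      · exact absurd h2 (rExt_ne_lExt hL hx hy')
    · rcases Sym2.mem_iff.mp he' with h2 | h2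
      · exact absurd h2.symm (rExt_ne_lExt hL hx' hy)
      · obtain rfl := lExt_inj hL hy hy' h2
        obtain rfl := hl hE hE'
        rfl

lemma mem_ins2_erase2 (hL : (L.map mOcc).Nodup) {GA : Finset (Sym2 Ext)}
    {E : Mk → Mk → Prop}
    (hmem : ∀ t, t ∈ GA ↔ ∃ x y, E x y ∧ t = σa x y)
    (hEL : ∀ {x y}, E x y → x ∈ L ∧ y ∈ L)
    {x₁ y₁ x₂ y₂ x₃ y₃ x₄ y₄ : Mk}
    (h1 : x₁ ∈ L) (h2 : y₁ ∈ L) (h3 : x₂ ∈ L) (h4 : y₂ ∈ L)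
    (t : Sym2 Ext) :
    t ∈ insert (σa x₃ y₃) (insert (σa x₄ y₄) ((GA.erase (σa x₁ y₁)).erase (σa x₂ y₂))) ↔
      ∃ x y, ((x = x₃ ∧ y = y₃) ∨ (x = x₄ ∧ y = y₄) ∨
        (E x y ∧ ¬(x = x₁ ∧ y = y₁) ∧ ¬(x = x₂ ∧ y = y₂))) ∧ t = σa x y := by
  simp only [Finset.mem_insert, Finset.mem_erase, hmem]
  constructor
  · rintro (rfl | rfl | ⟨hne2, hne1, x, y, hE, rfl⟩)
    · exact ⟨x₃, y₃, Or.inl ⟨rfl, rfl⟩, rfl⟩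
    · exact ⟨x₄, y₄, Or.inr (Or.inl ⟨rfl, rfl⟩), rfl⟩
    · refine ⟨x, y, Or.inr (Or.inr ⟨hE, ?_, ?_⟩), rfl⟩
      · rintro ⟨rfl, rfl⟩; exact hne1 rfl
      · rintro ⟨rfl, rfl⟩; exact hne2 rfl
  · rintro ⟨x, y, (⟨rfl, rfl⟩ | ⟨rfl, rfl⟩ | ⟨hE, hn1, hn2⟩), rfl⟩
    · exact Or.inl rfl
    · exact Or.inr (Or.inl rfl)
    · obtain ⟨hxL, hyL⟩ := hEL hE
      refine Or.inr (Or.inr ⟨?_, ?_, x, y, hE, rfl⟩)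
      · intro h; exact hn2 ((σa_eq_iff hL hxL hyL h3 h4).mp h)
      · intro h; exact hn1 ((σa_eq_iff hL hxL hyL h1 h2).mp h)

lemma mem_ins1_erase1 (hL : (L.map mOcc).Nodup) {GA : Finset (Sym2 Ext)}
    {E : Mk → Mk → Prop}
    (hmem : ∀ t, t ∈ GA ↔ ∃ x y, E x y ∧ t = σa x y)
    (hEL : ∀ {x y}, E x y → x ∈ L ∧ y ∈ L)
    {x₁ y₁ x₃ y₃ : Mk}
    (h1 : x₁ ∈ L) (h2 : y₁ ∈ L)
    (t : Sym2 Ext) :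
    t ∈ insert (σa x₃ y₃) (GA.erase (σa x₁ y₁)) ↔
      ∃ x y, ((x = x₃ ∧ y = y₃) ∨ (E x y ∧ ¬(x = x₁ ∧ y = y₁))) ∧ t = σa x y := by
  simp only [Finset.mem_insert, Finset.mem_erase, hmem]
  constructor
  · rintro (rfl | ⟨hne1, x, y, hE, rfl⟩)
    · exact ⟨x₃, y₃, Or.inl ⟨rfl, rfl⟩, rfl⟩
    · refine ⟨x, y, Or.inr ⟨hE, ?_⟩, rfl⟩
      rintro ⟨rfl, rfl⟩; exact hne1 rfl
  · rintro ⟨x, y, (⟨rfl, rfl⟩ | ⟨hE, hn1⟩), rfl⟩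
    · exact Or.inl rfl
    · obtain ⟨hxL, hyL⟩ := hEL hE
      refine Or.inr ⟨?_, x, y, hE, rfl⟩
      intro h; exact hn1 ((σa_eq_iff hL hxL hyL h1 h2).mp h)

lemma adj_ext {A B : Finset (Sym2 Ext)} {E₁ E₂ : Mk → Mk → Prop}
    (h₁ : ∀ t, t ∈ A ↔ ∃ x y, E₁ x y ∧ t = σa x y)
    (h₂ : ∀ t, t ∈ B ↔ ∃ x y, E₂ x y ∧ t = σa x y)
    (hiff : ∀ x y, E₁ x y ↔ E₂ x y) : A = B := by
  ext t
  rw [h₁, h₂]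
  constructor <;> rintro ⟨x, y, h, rfl⟩
  · exact ⟨x, y, (hiff x y).mp h, rfl⟩
  · exact ⟨x, y, (hiff x y).mpr h, rfl⟩

lemma not_matched_lExt (hL : (L.map mOcc).Nodup) {G : Genome} {E : Mk → Mk → Prop}
    (hmem : ∀ t, t ∈ G.adj ↔ ∃ x y, E x y ∧ t = σa x y)
    (hEL : ∀ {x y}, E x y → x ∈ L ∧ y ∈ L)
    {m : Mk} (hm : m ∈ L) (hnp : ∀ x, E x m → False) : ¬ G.matched (lExt m) := by
  rintro ⟨t, ht, he⟩
  obtain ⟨x, y, hE, rfl⟩ := (hmem t).mp ht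
  obtain ⟨hx, hy⟩ := hEL hE
  rcases Sym2.mem_iff.mp he with h | h
  · exact rExt_ne_lExt hL hx hm h.symm
  · obtain rfl := lExt_inj hL hm hy h
    exact hnp x hE

lemma not_matched_rExt (hL : (L.map mOcc).Nodup) {G : Genome} {E : Mk → Mk → Prop}
    (hmem : ∀ t, t ∈ G.adj ↔ ∃ x y, E x y ∧ t = σa x y)
    (hEL : ∀ {x y}, E x y → x ∈ L ∧ y ∈ L)
    {m : Mk} (hm : m ∈ L) (hns : ∀ y, E m y → False) : ¬ G.matched (rExt m) := by
  rintro ⟨t, ht, he⟩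
  obtain ⟨x, y, hE, rfl⟩ := (hmem t).mp ht
  obtain ⟨hx, hy⟩ := hEL hE
  rcases Sym2.mem_iff.mp he with h | h
  · obtain rfl := rExt_inj hL hm hx h
    exact hns y hE
  · exact rExt_ne_lExt hL hm hy h

end OccInj

/-- Every block interchange on a linear chromosome, swapping the segments `u`
and `v` of the chromosome `(∘ p u q v r ∘)`, is equivalent to the composition
of two DCJ operations: an excision producing `(∘ p v r ∘)(u q)`, which
extracts and circularizes the segment `[u ; q]`, followed by the reintegration
of the circular chromosome producing `(∘ p v q u r ∘)`. -/
theorem block_interchange_as_two_dcj (p u q v r : List Mk)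
    (hu : u ≠ []) (hv : v ≠ [])
    (hnd : ((p ++ u ++ q ++ v ++ r).map mOcc).Nodup) :
    IsDCJ (linGenome (p ++ u ++ q ++ v ++ r))
      ⟨occsOf (p ++ u ++ q ++ v ++ r), linAdj (p ++ v ++ r) ∪ circAdj (u ++ q)⟩ ∧
    IsDCJ ⟨occsOf (p ++ u ++ q ++ v ++ r), linAdj (p ++ v ++ r) ∪ circAdj (u ++ q)⟩
      (linGenome (p ++ v ++ q ++ u ++ r)) ∧
    Scen IsDCJ 2 (linGenome (p ++ u ++ q ++ v ++ r))
      (linGenome (p ++ v ++ q ++ u ++ r)) := by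
  classical
  -- basic nodup and disjointness facts
  have hL : (p ++ u ++ q ++ v ++ r).Nodup := List.Nodup.of_map mOcc hnd
  have hL' : (p ++ (u ++ (q ++ (v ++ r)))).Nodup := by simpa [List.append_assoc] using hL
  obtain ⟨hpN, hrest1, dp⟩ := List.nodup_append'.mp hL'
  obtain ⟨huN, hrest2, du⟩ := List.nodup_append'.mp hrest1
  obtain ⟨hqN, hrest3, dq⟩ := List.nodup_append'.mp hrest2
  obtain ⟨hvN, hrN, dv⟩ := List.nodup_append'.mp hrest3
  have Dpu : ∀ {x : Mk}, x ∈ p → x ∈ u → False := fun hx hy => dp hx (by simp [hy])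
  have Dpq : ∀ {x : Mk}, x ∈ p → x ∈ q → False := fun hx hy => dp hx (by simp [hy])
  have Dpv : ∀ {x : Mk}, x ∈ p → x ∈ v → False := fun hx hy => dp hx (by simp [hy])
  have Dpr : ∀ {x : Mk}, x ∈ p → x ∈ r → False := fun hx hy => dp hx (by simp [hy])
  have Duq : ∀ {x : Mk}, x ∈ u → x ∈ q → False := fun hx hy => du hx (by simp [hy])
  have Duv : ∀ {x : Mk}, x ∈ u → x ∈ v → False := fun hx hy => du hx (by simp [hy])
  have Dur : ∀ {x : Mk}, x ∈ u → x ∈ r → False := fun hx hy => du hx (by simp [hy])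
  have Dqv : ∀ {x : Mk}, x ∈ q → x ∈ v → False := fun hx hy => dq hx (by simp [hy])
  have Dqr : ∀ {x : Mk}, x ∈ q → x ∈ r → False := fun hx hy => dq hx (by simp [hy])
  have Dvr : ∀ {x : Mk}, x ∈ v → x ∈ r → False := fun hx hy => dv hx hy
  have huq : u ++ q ≠ [] := by simp [hu]
  have hqu : q ++ u ≠ [] := by simp [hu]
  have hPVR : (p ++ v ++ r).Nodup := by
    rw [List.append_assoc, List.nodup_append']
    refine ⟨hpN, List.nodup_append'.mpr ⟨hvN, hrN, dv⟩, fun _ hx hy => dp hx ?_⟩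
    simp only [List.mem_append] at hy ⊢
    tauto
  have hUQ : (u ++ q).Nodup := List.nodup_append'.mpr ⟨huN, hqN, fun _ hx hy => du hx (by simp [hy])⟩
  have hW : (q ++ u).Nodup := List.nodup_append'.mpr ⟨hqN, huN, fun _ hx hy => du hy (by simp [hx])⟩
  have hpermF : (p ++ u ++ q ++ v ++ r).Perm (p ++ v ++ q ++ u ++ r) :=
    List.perm_iff_count.mpr (fun a => by simp only [List.count_append]; ring)
  have hndF : ((p ++ v ++ q ++ u ++ r).map mOcc).Nodup :=
    ((hpermF.map mOcc).nodup_iff).mp hnd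
  have hFIN : (p ++ v ++ q ++ u ++ r).Nodup := List.Nodup.of_map mOcc hndF
  -- membership in the full marker list
  have mP : ∀ {x : Mk}, x ∈ p → x ∈ p ++ u ++ q ++ v ++ r := fun h => by
    simp only [List.mem_append]; tauto
  have mU : ∀ {x : Mk}, x ∈ u → x ∈ p ++ u ++ q ++ v ++ r := fun h => by
    simp only [List.mem_append]; tauto
  have mQ : ∀ {x : Mk}, x ∈ q → x ∈ p ++ u ++ q ++ v ++ r := fun h => by
    simp only [List.mem_append]; tauto
  have mV : ∀ {x : Mk}, x ∈ v → x ∈ p ++ u ++ q ++ v ++ r := fun h => by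
    simp only [List.mem_append]; tauto
  have mR : ∀ {x : Mk}, x ∈ r → x ∈ p ++ u ++ q ++ v ++ r := fun h => by
    simp only [List.mem_append]; tauto
  have mPVR : ∀ {x : Mk}, x ∈ p ++ v ++ r → x ∈ p ++ u ++ q ++ v ++ r := fun h => by
    simp only [List.mem_append] at h ⊢; tauto
  have mUQ : ∀ {x : Mk}, x ∈ u ++ q → x ∈ p ++ u ++ q ++ v ++ r := fun h => by
    simp only [List.mem_append] at h ⊢; tauto
  have mQU : ∀ {x : Mk}, x ∈ q ++ u → x ∈ p ++ u ++ q ++ v ++ r := fun h => by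
    simp only [List.mem_append] at h ⊢; tauto
  have hvuq : ∀ {x : Mk}, x ∈ u ++ q → x ∈ v → False := fun hx hy => by
    simp only [List.mem_append] at hx
    rcases hx with h | h
    · exact Duv h hy
    · exact Dqv h hy
  -- occurrences
  have hoccL : ∀ {x : Mk}, x ∈ p ++ u ++ q ++ v ++ r →
      mOcc x ∈ occsOf (p ++ u ++ q ++ v ++ r) := fun h => by
    simp only [occsOf, List.mem_toFinset, List.mem_map]; exact ⟨_, h, rfl⟩
  have hoccF : ∀ {x : Mk}, x ∈ p ++ v ++ q ++ u ++ r →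
      mOcc x ∈ occsOf (p ++ v ++ q ++ u ++ r) := fun h => by
    simp only [occsOf, List.mem_toFinset, List.mem_map]; exact ⟨_, h, rfl⟩
  have hoccEq : occsOf (p ++ u ++ q ++ v ++ r) = occsOf (p ++ v ++ q ++ u ++ r) := by
    simp only [occsOf]
    exact List.toFinset_eq_of_perm _ _ (hpermF.map mOcc)
  -- adjacency characterizations
  have hmemG : ∀ t : Sym2 Ext, t ∈ (linGenome (p ++ u ++ q ++ v ++ r)).adj ↔
      ∃ x y, [x, y] <:+: p ++ u ++ q ++ v ++ r ∧ t = σa x y := fun t => mem_linAdj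
  have hELG : ∀ {x y : Mk}, [x, y] <:+: p ++ u ++ q ++ v ++ r →
      x ∈ p ++ u ++ q ++ v ++ r ∧ y ∈ p ++ u ++ q ++ v ++ r :=
    fun h => ⟨pair_infix_mem_left h, pair_infix_mem_right h⟩
  have hmemF : ∀ t : Sym2 Ext, t ∈ (linGenome (p ++ v ++ q ++ u ++ r)).adj ↔
      ∃ x y, [x, y] <:+: p ++ v ++ q ++ u ++ r ∧ t = σa x y := fun t => mem_linAdj
  have hELF : ∀ {x y : Mk}, [x, y] <:+: p ++ v ++ q ++ u ++ r →
      x ∈ p ++ v ++ q ++ u ++ r ∧ y ∈ p ++ v ++ q ++ u ++ r :=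
    fun h => ⟨pair_infix_mem_left h, pair_infix_mem_right h⟩
  have hmemK1 : ∀ t : Sym2 Ext, t ∈ linAdj (p ++ v ++ r) ∪ circAdj (u ++ q) ↔
      ∃ x y, ([x, y] <:+: p ++ v ++ r ∨ [x, y] <:+: u ++ q ∨
        (x = (u ++ q).getLastI ∧ y = (u ++ q).headI)) ∧ t = σa x y := by
    intro t
    rw [Finset.mem_union, mem_linAdj, mem_circAdj huq]
    constructor
    · rintro (⟨x, y, h, rfl⟩ | ⟨x, y, h, rfl⟩)
      · exact ⟨x, y, Or.inl h, rfl⟩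
      · exact ⟨x, y, Or.inr h, rfl⟩
    · rintro ⟨x, y, h | h, rfl⟩
      · exact Or.inl ⟨x, y, h, rfl⟩
      · exact Or.inr ⟨x, y, h, rfl⟩
  have hmemK2 : ∀ t : Sym2 Ext, t ∈ linAdj (p ++ v ++ r) ∪ circAdj (u ++ q) ↔
      ∃ x y, ([x, y] <:+: p ++ v ++ r ∨ [x, y] <:+: q ++ u ∨
        (x = (q ++ u).getLastI ∧ y = (q ++ u).headI)) ∧ t = σa x y := by
    intro t
    rw [circAdj_rotate, Finset.mem_union, mem_linAdj, mem_circAdj hqu]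
    constructor
    · rintro (⟨x, y, h, rfl⟩ | ⟨x, y, h, rfl⟩)
      · exact ⟨x, y, Or.inl h, rfl⟩
      · exact ⟨x, y, Or.inr h, rfl⟩
    · rintro ⟨x, y, h | h, rfl⟩
      · exact Or.inl ⟨x, y, h, rfl⟩
      · exact Or.inr ⟨x, y, h, rfl⟩
  have hELK1 : ∀ {x y : Mk}, ([x, y] <:+: p ++ v ++ r ∨ [x, y] <:+: u ++ q ∨
      (x = (u ++ q).getLastI ∧ y = (u ++ q).headI)) →
      x ∈ p ++ u ++ q ++ v ++ r ∧ y ∈ p ++ u ++ q ++ v ++ r := by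
    rintro x y (h | h | ⟨rfl, rfl⟩)
    · exact ⟨mPVR (pair_infix_mem_left h), mPVR (pair_infix_mem_right h)⟩
    · exact ⟨mUQ (pair_infix_mem_left h), mUQ (pair_infix_mem_right h)⟩
    · exact ⟨mUQ (mem_getLastI huq), mUQ (mem_headI huq)⟩
  have hELK2 : ∀ {x y : Mk}, ([x, y] <:+: p ++ v ++ r ∨ [x, y] <:+: q ++ u ∨
      (x = (q ++ u).getLastI ∧ y = (q ++ u).headI)) →
      x ∈ p ++ u ++ q ++ v ++ r ∧ y ∈ p ++ u ++ q ++ v ++ r := by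
    rintro x y (h | h | ⟨rfl, rfl⟩)
    · exact ⟨mPVR (pair_infix_mem_left h), mPVR (pair_infix_mem_right h)⟩
    · exact ⟨mQU (pair_infix_mem_left h), mQU (pair_infix_mem_right h)⟩
    · exact ⟨mQU (mem_getLastI hqu), mQU (mem_headI hqu)⟩
  -- well-formedness
  have hWFG : (linGenome (p ++ u ++ q ++ v ++ r)).WF := by
    refine wf_of_rel hnd _ _ _ hmemG (fun h => hELG h) (fun h => hoccL h)
      (fun h h' => succ_unique hL h h') (fun h h' => pred_unique hL h h')
  have hWFF : (linGenome (p ++ v ++ q ++ u ++ r)).WF := by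
    refine wf_of_rel hndF _ _ _ hmemF (fun h => hELF h) (fun h => hoccF h)
      (fun h h' => succ_unique hFIN h h') (fun h h' => pred_unique hFIN h h')
  have hUQp : ∀ {z : Mk}, z ∈ p → z ∈ u ++ q → False := fun hz hz' => by
    rcases List.mem_append.mp hz' with h | h
    exacts [Dpu hz h, Dpq hz h]
  have hUvr : ∀ {z : Mk}, z ∈ u → z ∈ v ++ r → False := fun hz hz' => by
    rcases List.mem_append.mp hz' with h | h
    exacts [Duv hz h, Dur hz h]
  have hUQvr : ∀ {z : Mk}, z ∈ u ++ q → z ∈ v ++ r → False := fun hz hz' => by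
    rcases List.mem_append.mp hz with h | h
    · exact hUvr h hz'
    · rcases List.mem_append.mp hz' with h' | h'
      exacts [Dqv h h', Dqr h h']
  have hvW : ∀ {z : Mk}, z ∈ q ++ u → z ∈ v → False := fun hz hz' => by
    rcases List.mem_append.mp hz with h | h
    exacts [Dqv h hz', Duv h hz']
  have DK : ∀ {z : Mk}, z ∈ p ++ v ++ r → z ∈ u ++ q → False := fun hz hz' => by
    rcases List.mem_append.mp hz with h | h
    · rcases List.mem_append.mp h with h2 | h2
      · exact hUQp h2 hz'
      · exact hUQvr hz' (by simp [h2])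
    · exact hUQvr hz' (by simp [h])
  have hvr : v ++ r ≠ [] := by simp [hv]
  have hWFK : Genome.WF ⟨occsOf (p ++ u ++ q ++ v ++ r),
      linAdj (p ++ v ++ r) ∪ circAdj (u ++ q)⟩ := by
    refine wf_of_rel hnd _ _ _ hmemK1 (fun h => hELK1 h) (fun h => hoccL h) ?_ ?_
    · intro x y y' h1 h2
      rcases h1 with h1 | h1 | ⟨rfl, rfl⟩
      · rcases h2 with h2 | h2 | ⟨h2a, h2b⟩
        · exact succ_unique hPVR h1 h2
        · exact (DK (pair_infix_mem_left h1) (pair_infix_mem_left h2)).elim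
        · exact (DK (pair_infix_mem_left h1) (by rw [h2a]; exact mem_getLastI huq)).elim
      · rcases h2 with h2 | h2 | ⟨h2a, h2b⟩
        · exact (DK (pair_infix_mem_left h2) (pair_infix_mem_left h1)).elim
        · exact succ_unique hUQ h1 h2
        · exact (last_no_succ hUQ (by rw [← h2a]; exact h1)).elim
      · rcases h2 with h2 | h2 | ⟨h2a, h2b⟩
        · exact (DK (pair_infix_mem_left h2) (mem_getLastI huq)).elim
        · exact (last_no_succ hUQ h2).elim
        · exact h2b.symm
    · intro x x' y h1 h2
      rcases h1 with h1 | h1 | ⟨rfl, rfl⟩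
      · rcases h2 with h2 | h2 | ⟨h2a, h2b⟩
        · exact pred_unique hPVR h1 h2
        · exact (DK (pair_infix_mem_right h1) (pair_infix_mem_right h2)).elim
        · exact (DK (pair_infix_mem_right h1) (by rw [h2b]; exact mem_headI huq)).elim
      · rcases h2 with h2 | h2 | ⟨h2a, h2b⟩
        · exact (DK (pair_infix_mem_right h2) (pair_infix_mem_right h1)).elim
        · exact pred_unique hUQ h1 h2
        · exact (head_no_pred hUQ (by rw [← h2b]; exact h1)).elim
      · rcases h2 with h2 | h2 | ⟨h2a, h2b⟩
        · exact (DK (pair_infix_mem_right h2) (mem_headI huq)).elim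
        · exact (head_no_pred hUQ h2).elim
        · exact h2a.symm
  have hdcj1 : IsDCJ (linGenome (p ++ u ++ q ++ v ++ r))
      ⟨occsOf (p ++ u ++ q ++ v ++ r), linAdj (p ++ v ++ r) ∪ circAdj (u ++ q)⟩ := by
    refine ⟨hWFG, hWFK, rfl, ?_⟩
    rcases eq_or_ne p [] with rfl | hp
    · -- p = [] : excision uses the left telomere
      right; left
      simp only [List.nil_append] at *
      refine ⟨rExt (u ++ q).getLastI, lExt v.headI, lExt u.headI, ?_, ?_, ?_⟩
      · refine (hmemG _).mpr ⟨(u ++ q).getLastI, v.headI, ?_, rfl⟩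
        have h := junction_infix (a := u ++ q) (b := v ++ r) huq hvr
        rw [headI_append hv] at h
        simpa [List.append_assoc] using h
      · refine ⟨hoccL (mU (mem_headI hu)), ?_⟩
        refine not_matched_lExt hnd hmemG (fun h => hELG h) (mU (mem_headI hu)) ?_
        intro x hx
        have hhead : (u ++ q ++ v ++ r).headI = u.headI := by
          rw [headI_append (show u ++ q ++ v ≠ [] by simp [hu]), headI_append huq,
            headI_append hu]
        rw [← hhead] at hx
        exact head_no_pred hL hx
      · refine adj_ext hmemK1 (mem_ins1_erase1 hnd hmemG (fun h => hELG h)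
          (mUQ (mem_getLastI huq)) (mV (mem_headI hv))) ?_
        intro x y
        rw [show u ++ q ++ v ++ r = (u ++ q) ++ (v ++ r) by simp [List.append_assoc],
          pair_infix_append (a := u ++ q) (b := v ++ r)]
        simp only [headI_append hu, headI_append hv]
        constructor
        · rintro (h | h | ⟨rfl, rfl⟩)
          · refine Or.inr ⟨Or.inr (Or.inl h), ?_⟩
            rintro ⟨rfl, -⟩
            exact hUQvr (mem_getLastI huq) (pair_infix_mem_left h)
          · refine Or.inr ⟨Or.inl h, ?_⟩
            rintro ⟨rfl, -⟩
            exact last_no_succ hUQ h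
          · exact Or.inl ⟨rfl, rfl⟩
        · rintro (⟨rfl, rfl⟩ | ⟨h | h | ⟨-, rfl, rfl, -⟩, hn⟩)
          · exact Or.inr (Or.inr ⟨rfl, rfl⟩)
          · exact Or.inr (Or.inl h)
          · exact Or.inl h
          · exact (hn ⟨rfl, rfl⟩).elim
    · -- p ≠ [] : genuine two-cut DCJ
      left
      refine ⟨rExt p.getLastI, lExt u.headI, rExt (u ++ q).getLastI, lExt v.headI,
        ?_, ?_, ?_, Or.inr ?_⟩
      · refine (hmemG _).mpr ⟨p.getLastI, u.headI, ?_, rfl⟩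
        have h := junction_infix (a := p) (b := u ++ (q ++ (v ++ r))) hp (by simp [hu])
        rw [headI_append hu] at h
        simpa [List.append_assoc] using h
      · refine (hmemG _).mpr ⟨(u ++ q).getLastI, v.headI, ?_, rfl⟩
        have h := junction_infix (a := p ++ (u ++ q)) (b := v ++ r) (by simp [hp]) hvr
        rw [headI_append hv, getLastI_append huq] at h
        simpa [List.append_assoc] using h
      · intro hEq
        have h := (σa_eq_iff hnd (mP (mem_getLastI hp)) (mU (mem_headI hu))
          (mUQ (mem_getLastI huq)) (mV (mem_headI hv))).mp hEq
        exact Duv (mem_headI hu) (by rw [h.2]; exact mem_headI hv)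
      · rw [show s(lExt u.headI, rExt (u ++ q).getLastI) =
          σa (u ++ q).getLastI u.headI from Sym2.eq_swap]
        refine adj_ext hmemK1 (mem_ins2_erase2 hnd hmemG (fun h => hELG h)
          (mP (mem_getLastI hp)) (mU (mem_headI hu))
          (mUQ (mem_getLastI huq)) (mV (mem_headI hv))) ?_
        intro x y
        rw [show p ++ u ++ q ++ v ++ r = p ++ ((u ++ q) ++ (v ++ r)) by
            simp [List.append_assoc],
          show p ++ v ++ r = p ++ (v ++ r) from List.append_assoc p v r,
          pair_infix_append (a := p) (b := (u ++ q) ++ (v ++ r)),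
          pair_infix_append (a := u ++ q) (b := v ++ r),
          pair_infix_append (a := p) (b := v ++ r)]
        simp only [headI_append huq, headI_append hu, headI_append hv]
        constructor
        · rintro ((h | h | ⟨-, rfl, rfl, -⟩) | h | ⟨rfl, rfl⟩)
          · refine Or.inr (Or.inr ⟨Or.inl h, ?_, ?_⟩)
            · rintro ⟨rfl, -⟩
              exact last_no_succ hpN h
            · rintro ⟨rfl, -⟩
              exact hUQp (pair_infix_mem_left h) (mem_getLastI huq)
          · refine Or.inr (Or.inr ⟨Or.inr (Or.inl (Or.inr (Or.inl h))), ?_, ?_⟩)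
            · rintro ⟨-, rfl⟩
              exact hUvr (mem_headI hu) (pair_infix_mem_right h)
            · rintro ⟨rfl, -⟩
              exact hUQvr (mem_getLastI huq) (pair_infix_mem_left h)
          · exact Or.inl ⟨rfl, rfl⟩
          · refine Or.inr (Or.inr ⟨Or.inr (Or.inl (Or.inl h)), ?_, ?_⟩)
            · rintro ⟨rfl, -⟩
              exact hUQp (mem_getLastI hp) (pair_infix_mem_left h)
            · rintro ⟨rfl, -⟩
              exact last_no_succ hUQ h
          · exact Or.inr (Or.inl ⟨rfl, rfl⟩)
        · rintro (⟨rfl, rfl⟩ | ⟨rfl, rfl⟩ | ⟨h | (h | h | ⟨-, rfl, rfl, -⟩) |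
            ⟨-, rfl, rfl, -⟩, hn1, hn2⟩)
          · exact Or.inl (Or.inr (Or.inr ⟨hp, rfl, rfl, hvr⟩))
          · exact Or.inr (Or.inr ⟨rfl, rfl⟩)
          · exact Or.inl (Or.inl h)
          · exact Or.inr (Or.inl h)
          · exact Or.inl (Or.inr (Or.inl h))
          · exact (hn2 ⟨rfl, rfl⟩).elim
          · exact (hn1 ⟨rfl, rfl⟩).elim
  have hdcj2 : IsDCJ ⟨occsOf (p ++ u ++ q ++ v ++ r),
      linAdj (p ++ v ++ r) ∪ circAdj (u ++ q)⟩ (linGenome (p ++ v ++ q ++ u ++ r)) := by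
    refine ⟨hWFK, hWFF, hoccEq, ?_⟩
    rcases eq_or_ne r [] with rfl | hr
    · -- r = [] : reintegration uses the right telomere
      right; left
      simp only [List.append_nil] at *
      refine ⟨lExt (q ++ u).headI, rExt u.getLastI, rExt v.getLastI, ?_, ?_, ?_⟩
      · rw [show s(lExt (q ++ u).headI, rExt u.getLastI) =
          σa u.getLastI (q ++ u).headI from Sym2.eq_swap]
        exact (hmemK2 _).mpr ⟨u.getLastI, (q ++ u).headI,
          Or.inr (Or.inr ⟨(getLastI_append hu).symm, rfl⟩), rfl⟩
      · refine ⟨hoccL (mV (mem_getLastI hv)), ?_⟩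
        refine not_matched_rExt hnd hmemK2 (fun h => hELK2 h) (mV (mem_getLastI hv)) ?_
        intro y hy
        rcases hy with h | h | ⟨hx, -⟩
        · exact last_no_succ hPVR (by rw [getLastI_append hv]; exact h)
        · exact hvW (pair_infix_mem_left h) (mem_getLastI hv)
        · exact hvW (by rw [hx]; exact mem_getLastI hqu) (mem_getLastI hv)
      · rw [show s(lExt (q ++ u).headI, rExt v.getLastI) =
            σa v.getLastI (q ++ u).headI from Sym2.eq_swap,
          show s(lExt (q ++ u).headI, rExt u.getLastI) =
            σa u.getLastI (q ++ u).headI from Sym2.eq_swap]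
        refine adj_ext hmemF (mem_ins1_erase1 hnd hmemK2 (fun h => hELK2 h)
          (mU (mem_getLastI hu)) (mQU (mem_headI hqu))) ?_
        intro x y
        rw [show p ++ v ++ q ++ u = p ++ (v ++ (q ++ u)) by simp [List.append_assoc],
          pair_infix_append (a := p) (b := v ++ (q ++ u)),
          pair_infix_append (a := v) (b := q ++ u),
          show p ++ v = p ++ v from rfl,
          pair_infix_append (a := p) (b := v),
          show (q ++ u).getLastI = u.getLastI from getLastI_append hu]
        simp only [headI_append hv]
        constructor
        · rintro (h | (h | h | ⟨-, rfl, rfl, -⟩) | ⟨hpg, rfl, rfl, -⟩)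
          · refine Or.inr ⟨Or.inl (Or.inl h), ?_⟩
            rintro ⟨rfl, -⟩
            exact Dpu (pair_infix_mem_left h) (mem_getLastI hu)
          · refine Or.inr ⟨Or.inl (Or.inr (Or.inl h)), ?_⟩
            rintro ⟨rfl, -⟩
            exact Duv (mem_getLastI hu) (pair_infix_mem_left h)
          · refine Or.inr ⟨Or.inr (Or.inl h), ?_⟩
            rintro ⟨rfl, -⟩
            exact last_no_succ hW (by rw [getLastI_append hu]; exact h)
          · exact Or.inl ⟨rfl, rfl⟩
          · refine Or.inr ⟨Or.inl (Or.inr (Or.inr ⟨hpg, rfl, rfl, hv⟩)), ?_⟩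
            rintro ⟨hh, -⟩
            exact Dpu (mem_getLastI hpg) (by rw [hh]; exact mem_getLastI hu)
        · rintro (⟨rfl, rfl⟩ | ⟨(h | h | ⟨hpg, rfl, rfl, -⟩) | h | ⟨rfl, rfl⟩, hn⟩)
          · exact Or.inr (Or.inl (Or.inr (Or.inr ⟨hv, rfl, rfl, hqu⟩)))
          · exact Or.inl h
          · exact Or.inr (Or.inl (Or.inl h))
          · exact Or.inr (Or.inr ⟨hpg, rfl, rfl, by simp [hv]⟩)
          · exact Or.inr (Or.inl (Or.inr (Or.inl h)))
          · exact (hn ⟨rfl, rfl⟩).elim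
    · -- r ≠ [] : genuine two-cut DCJ
      left
      refine ⟨rExt u.getLastI, lExt (q ++ u).headI, rExt v.getLastI, lExt r.headI,
        ?_, ?_, ?_, Or.inr ?_⟩
      · exact (hmemK2 _).mpr ⟨u.getLastI, (q ++ u).headI,
          Or.inr (Or.inr ⟨(getLastI_append hu).symm, rfl⟩), rfl⟩
      · refine (hmemK2 _).mpr ⟨v.getLastI, r.headI, Or.inl ?_, rfl⟩
        have h := junction_infix (a := p ++ v) (b := r) (by simp [hv]) hr
        rw [getLastI_append hv] at h
        exact h
      · intro hEq
        have h := (σa_eq_iff hnd (mU (mem_getLastI hu)) (mQU (mem_headI hqu))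
          (mV (mem_getLastI hv)) (mR (mem_headI hr))).mp hEq
        exact Duv (mem_getLastI hu) (by rw [h.1]; exact mem_getLastI hv)
      · rw [show s(lExt (q ++ u).headI, rExt v.getLastI) =
          σa v.getLastI (q ++ u).headI from Sym2.eq_swap]
        refine adj_ext hmemF (mem_ins2_erase2 hnd hmemK2 (fun h => hELK2 h)
          (mU (mem_getLastI hu)) (mQU (mem_headI hqu))
          (mV (mem_getLastI hv)) (mR (mem_headI hr))) ?_
        intro x y
        rw [show p ++ v ++ q ++ u ++ r = p ++ (v ++ ((q ++ u) ++ r)) by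
            simp [List.append_assoc],
          show p ++ v ++ r = p ++ (v ++ r) from List.append_assoc p v r,
          pair_infix_append (a := p) (b := v ++ ((q ++ u) ++ r)),
          pair_infix_append (a := v) (b := (q ++ u) ++ r),
          pair_infix_append (a := q ++ u) (b := r),
          pair_infix_append (a := p) (b := v ++ r),
          pair_infix_append (a := v) (b := r),
          show (q ++ u).getLastI = u.getLastI from getLastI_append hu]
        simp only [headI_append hv, headI_append hqu]
        constructor
        · rintro (h | (h | (h | h | ⟨-, rfl, rfl, -⟩) | ⟨-, rfl, rfl, -⟩) |
            ⟨hpg, rfl, rfl, -⟩)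
          · refine Or.inr (Or.inr ⟨Or.inl (Or.inl h), ?_, ?_⟩)
            · rintro ⟨rfl, -⟩
              exact Dpu (pair_infix_mem_left h) (mem_getLastI hu)
            · rintro ⟨rfl, -⟩
              exact Dpv (pair_infix_mem_left h) (mem_getLastI hv)
          · refine Or.inr (Or.inr ⟨Or.inl (Or.inr (Or.inl (Or.inl h))), ?_, ?_⟩)
            · rintro ⟨rfl, -⟩
              exact Duv (mem_getLastI hu) (pair_infix_mem_left h)
            · rintro ⟨rfl, -⟩
              exact last_no_succ hvN h
          · refine Or.inr (Or.inr ⟨Or.inr (Or.inl h), ?_, ?_⟩)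
            · rintro ⟨rfl, -⟩
              exact last_no_succ hW (by rw [getLastI_append hu]; exact h)
            · rintro ⟨rfl, -⟩
              exact hvW (pair_infix_mem_left h) (mem_getLastI hv)
          · refine Or.inr (Or.inr ⟨Or.inl (Or.inr (Or.inl (Or.inr (Or.inl h)))), ?_, ?_⟩)
            · rintro ⟨rfl, -⟩
              exact Dur (mem_getLastI hu) (pair_infix_mem_left h)
            · rintro ⟨rfl, -⟩
              exact Dvr (mem_getLastI hv) (pair_infix_mem_left h)
          · exact Or.inl ⟨rfl, rfl⟩
          · exact Or.inr (Or.inl ⟨rfl, rfl⟩)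
          · refine Or.inr (Or.inr ⟨Or.inl (Or.inr (Or.inr ⟨hpg, rfl, rfl, hvr⟩)),
              ?_, ?_⟩)
            · rintro ⟨hh, -⟩
              exact Dpu (mem_getLastI hpg) (by rw [hh]; exact mem_getLastI hu)
            · rintro ⟨hh, -⟩
              exact Dpv (mem_getLastI hpg) (by rw [hh]; exact mem_getLastI hv)
        · rintro (⟨rfl, rfl⟩ | ⟨rfl, rfl⟩ |
            ⟨(h | (h | h | ⟨-, rfl, rfl, -⟩) | ⟨hpg, rfl, rfl, -⟩) | h | ⟨rfl, rfl⟩,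
              hn1, hn2⟩)
          · exact Or.inr (Or.inl (Or.inr (Or.inl (Or.inr (Or.inr ⟨hqu, rfl, rfl, hr⟩)))))
          · exact Or.inr (Or.inl (Or.inr (Or.inr ⟨hv, rfl, rfl, by simp [hr]⟩)))
          · exact Or.inl h
          · exact Or.inr (Or.inl (Or.inl h))
          · exact Or.inr (Or.inl (Or.inr (Or.inl (Or.inr (Or.inl h)))))
          · exact (hn2 ⟨rfl, rfl⟩).elim
          · exact Or.inr (Or.inr ⟨hpg, rfl, rfl, by simp [hv]⟩)
          · exact Or.inr (Or.inl (Or.inr (Or.inl (Or.inl h))))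
          · exact (hn1 ⟨rfl, rfl⟩).elim
  exact ⟨hdcj1, hdcj2, _, hdcj1, _, hdcj2, rfl⟩

end Rearr
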